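/- Consider the residual-sketch iteration: given A ∈ ℝ^{m×n}, b ∈ ℝ^m, x₀ ∈ ℝ^n, set r₀ = b − A x₀ and for j ≥ 1 let S_j = [r₀ … r_{j−1}], p_j = Aᵀ S_j (S_jᵀ A Aᵀ S_j)⁻¹ S_jᵀ r_{j−1}, x_j = x_{j−1} + p_j, r_j = b − A x_j, assuming the Gram matrices are invertible through step k, with k ≥ 2. Set y_k = Aᵀ r_{k−1}. Then y_kᵀ p_{k−1} = −‖r_{k−1}‖₂², y_kᵀ p_j = 0 for every 1 ≤ j ≤ k−2, and y_kᵀ p_k = ‖r_{k−1}‖₂². -/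
import Mathlib


open Matrix

/-- `colCat r k` is the matrix `[r 0 … r (k-1)]` whose `l`-th column is `r l`. -/
def colCat {m : ℕ} (r : ℕ → Fin m → ℝ) (k : ℕ) : Matrix (Fin m) (Fin k) ℝ :=
  Matrix.of fun i l => r l.val i

/-- In the residual-sketch (PLSS) iteration, with `y_k = Aᵀ r_{k−1}`:
`y_kᵀ p_{k−1} = −‖r_{k−1}‖²`, `y_kᵀ p_j = 0` for `1 ≤ j ≤ k−2`, and
`y_kᵀ p_k = ‖r_{k−1}‖²`. -/
theorem stmt13 (m n k : ℕ) (hk : 2 ≤ k)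
    (A : Matrix (Fin m) (Fin n) ℝ) (b : Fin m → ℝ)
    (x p : ℕ → Fin n → ℝ) (r : ℕ → Fin m → ℝ)
    (hr : ∀ j, r j = b - A.mulVec (x j))
    (hinv : ∀ j, 1 ≤ j → j ≤ k → IsUnit ((colCat r j)ᵀ * A * Aᵀ * colCat r j))
    (hp : ∀ j, 1 ≤ j → j ≤ k →
      p j = (Aᵀ * colCat r j).mulVec
        (((colCat r j)ᵀ * A * Aᵀ * colCat r j)⁻¹.mulVec
          ((colCat r j)ᵀ.mulVec (r (j - 1)))))
    (hx : ∀ j, 1 ≤ j → j ≤ k → x j = x (j - 1) + p j)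
    (y : Fin n → ℝ) (hy : y = Aᵀ.mulVec (r (k - 1))) :
    y ⬝ᵥ p (k - 1) = -(r (k - 1) ⬝ᵥ r (k - 1)) ∧
    (∀ j, 1 ≤ j → j ≤ k - 2 → y ⬝ᵥ p j = 0) ∧
    y ⬝ᵥ p k = r (k - 1) ⬝ᵥ r (k - 1) := by
  -- residual recursion
  have hrec : ∀ j, 1 ≤ j → j ≤ k → r j = r (j - 1) - A.mulVec (p j) := by
    intro j h1 h2
    rw [hr j, hr (j - 1), hx j h1 h2, Matrix.mulVec_add]
    abel
  -- S_jᵀ r_j = 0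
  have horthS : ∀ j, 1 ≤ j → j ≤ k → (colCat r j)ᵀ.mulVec (r j) = 0 := by
    intro j h1 h2
    rw [hrec j h1 h2, Matrix.mulVec_sub, hp j h1 h2,
      Matrix.mulVec_mulVec, Matrix.mulVec_mulVec, Matrix.mulVec_mulVec,
      Matrix.mulVec_mulVec]
    have hG : (colCat r j)ᵀ * A * (Aᵀ * colCat r j) *
        ((colCat r j)ᵀ * A * Aᵀ * colCat r j)⁻¹ = 1 := by
      have hd : IsUnit ((colCat r j)ᵀ * A * Aᵀ * colCat r j).det :=
        (Matrix.isUnit_iff_isUnit_det _).mp (hinv j h1 h2)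
      have h : (colCat r j)ᵀ * A * (Aᵀ * colCat r j) =
          (colCat r j)ᵀ * A * Aᵀ * colCat r j := by
        simp [Matrix.mul_assoc]
      rw [h, Matrix.mul_nonsing_inv _ hd]
    rw [hG, Matrix.one_mul, sub_self]
  -- pairwise orthogonality
  have horth : ∀ i j, i < j → j ≤ k → r i ⬝ᵥ r j = 0 := by
    intro i j hij hjk
    have h1 : 1 ≤ j := Nat.lt_of_le_of_lt (Nat.zero_le i) hij
    have := congrFun (horthS j h1 hjk) ⟨i, hij⟩
    simpa [Matrix.mulVec, dotProduct, colCat] using this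
  have hAp : ∀ j, 1 ≤ j → j ≤ k → A.mulVec (p j) = r (j - 1) - r j := by
    intro j h1 h2
    rw [hrec j h1 h2]; abel
  have hyd : ∀ j, 1 ≤ j → j ≤ k →
      y ⬝ᵥ p j = r (k - 1) ⬝ᵥ r (j - 1) - r (k - 1) ⬝ᵥ r j := by
    intro j h1 h2
    rw [hy, Matrix.mulVec_transpose, ← Matrix.dotProduct_mulVec,
      hAp j h1 h2, dotProduct_sub]
  refine ⟨?_, ?_, ?_⟩
  · have h1 : 1 ≤ k - 1 := by omega
    have h2 : k - 1 ≤ k := by omega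
    rw [hyd (k - 1) h1 h2]
    have h0 : r (k - 1) ⬝ᵥ r (k - 1 - 1) = 0 := by
      rw [dotProduct_comm]
      exact horth (k - 1 - 1) (k - 1) (by omega) (by omega)
    rw [h0]; ring
  · intro j hj1 hj2
    rw [hyd j hj1 (by omega)]
    have h0 : r (k - 1) ⬝ᵥ r (j - 1) = 0 := by
      rw [dotProduct_comm]
      exact horth (j - 1) (k - 1) (by omega) (by omega)
    have h0' : r (k - 1) ⬝ᵥ r j = 0 := by
      rw [dotProduct_comm]
      exact horth j (k - 1) (by omega) (by omega)
    rw [h0, h0']; ring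
  · rw [hyd k (by omega) le_rfl, horth (k - 1) k (by omega) le_rfl]; ring
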